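/- Let V be a finite type of users, p : V → ℝ → ℝ with 0 ≤ p v d ≤ 1 for all v, d and p v nondecreasing in d, and q : Finset V → ℝ monotone and submodular. Let ε ∈ [0,1) and let γ : Finset V → ℝ satisfy (1 − ε)·q(U) ≤ γ(U) ≤ (1 + ε)·q(U) for all U : Finset V. For S : Finset (V × ℝ) define ρ_S(v) = p v (max of {d : (v,d) ∈ S}) if v receives some coupon in S and ρ_S(v) = 0 otherwise, Pr(U;S) = (∏_{u ∈ U} ρ_S(u)) · (∏_{v ∉ U} (1 − ρ_S(v))), f(S) = Σ_{U ⊆ V} Pr(U;S) · γ(U), and g(S) = Σ_{U ⊆ V} Pr(U;S) · q(U). Then g is monotone and submodular, and (1 − ε)·g(S) ≤ f(S) ≤ (1 + ε)·g(S) for all S; that is, f is ε-approximately submodular. -/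

import Mathlib

open Finset

/-- Activation probability of user `v` under allocation `S`: `p v` applied to the
largest coupon value offered to `v` in `S`, or `0` if `v` receives no coupon. -/
noncomputable def rho {V : Type*} [Fintype V] [DecidableEq V]
    (p : V → ℝ → ℝ) (S : Finset (V × ℝ)) (v : V) : ℝ :=
  if h : ((S.filter (fun e => e.1 = v)).image Prod.snd).Nonempty then
    p v (((S.filter (fun e => e.1 = v)).image Prod.snd).max' h)
  else 0

/-- Probability that exactly the set `U` of users becomes the seed set under
allocation `S`, users being activated independently. -/
noncomputable def prSeed {V : Type*} [Fintype V] [DecidableEq V]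
    (p : V → ℝ → ℝ) (U : Finset V) (S : Finset (V × ℝ)) : ℝ :=
  (∏ u ∈ U, rho p S u) * ∏ v ∈ Uᶜ, (1 - rho p S v)

/-- The expected cascade of allocation `S` with respect to a seed-set utility `γ`. -/
noncomputable def expCascade {V : Type*} [Fintype V] [DecidableEq V]
    (p : V → ℝ → ℝ) (γ : Finset V → ℝ) (S : Finset (V × ℝ)) : ℝ :=
  ∑ U : Finset V, prSeed p U S * γ U

namespace ApproxSubAux
set_option linter.unusedSectionVars false

variable {V : Type*} [Fintype V] [DecidableEq V]

/-- set of coupon values offered to `v` in `S` -/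
noncomputable def coup (S : Finset (V × ℝ)) (v : V) : Finset ℝ :=
  (S.filter (fun e => e.1 = v)).image Prod.snd

lemma rho_eq (p : V → ℝ → ℝ) (S : Finset (V × ℝ)) (v : V) :
    rho p S v = if h : (coup S v).Nonempty then p v ((coup S v).max' h) else 0 := rfl

lemma max'_congr' {α : Type*} [LinearOrder α] {s t : Finset α} (hst : s = t)
    (hs : s.Nonempty) (ht : t.Nonempty) : s.max' hs = t.max' ht := by
  subst hst; rfl

lemma coup_mono {S T : Finset (V × ℝ)} (h : S ⊆ T) (v : V) : coup S v ⊆ coup T v :=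
  Finset.image_subset_image (Finset.filter_subset_filter _ h)

lemma coup_insert_self (e : V × ℝ) (S : Finset (V × ℝ)) :
    coup (insert e S) e.1 = insert e.2 (coup S e.1) := by
  unfold coup
  rw [Finset.filter_insert, if_pos rfl, Finset.image_insert]

lemma coup_insert_ne {e : V × ℝ} {u : V} (h : e.1 ≠ u) (S : Finset (V × ℝ)) :
    coup (insert e S) u = coup S u := by
  unfold coup
  rw [Finset.filter_insert, if_neg h]

lemma rho_nonneg (p : V → ℝ → ℝ) (hp0 : ∀ v d, 0 ≤ p v d) (S : Finset (V × ℝ)) (v : V) :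
    0 ≤ rho p S v := by
  rw [rho_eq]
  split
  · exact hp0 _ _
  · exact le_refl _

lemma rho_le_one (p : V → ℝ → ℝ) (hp1 : ∀ v d, p v d ≤ 1) (S : Finset (V × ℝ)) (v : V) :
    rho p S v ≤ 1 := by
  rw [rho_eq]
  split
  · exact hp1 _ _
  · norm_num

lemma rho_mono (p : V → ℝ → ℝ) (hp0 : ∀ v d, 0 ≤ p v d)
    (hpmono : ∀ v, ∀ d d' : ℝ, d ≤ d' → p v d ≤ p v d')
    {S T : Finset (V × ℝ)} (h : S ⊆ T) (v : V) : rho p S v ≤ rho p T v := by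
  rw [rho_eq, rho_eq]
  by_cases hS : (coup S v).Nonempty
  · have hT : (coup T v).Nonempty := hS.mono (coup_mono h v)
    rw [dif_pos hS, dif_pos hT]
    exact hpmono v _ _ (Finset.max'_subset hS (coup_mono h v))
  · rw [dif_neg hS]
    split
    · exact hp0 _ _
    · exact le_refl _

lemma rho_insert_update (p : V → ℝ → ℝ) (e : V × ℝ) (S : Finset (V × ℝ)) :
    rho p (insert e S) = Function.update (rho p S) e.1 (rho p (insert e S) e.1) := by
  funext u
  by_cases h : u = e.1
  · subst h; rw [Function.update_self]
  · rw [Function.update_of_ne h]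
    rw [rho_eq, rho_eq, coup_insert_ne (fun hc => h hc.symm)]

/-- the marginal gain at coordinate `e.1` is antitone in `S`. -/
lemma delta_anti (p : V → ℝ → ℝ) (hp0 : ∀ v d, 0 ≤ p v d)
    (hpmono : ∀ v, ∀ d d' : ℝ, d ≤ d' → p v d ≤ p v d')
    {X Y : Finset (V × ℝ)} (hXY : X ⊆ Y) (e : V × ℝ) :
    rho p (insert e Y) e.1 - rho p Y e.1 ≤ rho p (insert e X) e.1 - rho p X e.1 := by
  obtain ⟨v, d⟩ := e
  simp only [rho_eq]
  have hX' : coup (insert (v, d) X) v = insert d (coup X v) := coup_insert_self (v, d) X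
  have hY' : coup (insert (v, d) Y) v = insert d (coup Y v) := coup_insert_self (v, d) Y
  have hXne : (coup (insert (v, d) X) v).Nonempty := by rw [hX']; exact insert_nonempty _ _
  have hYne : (coup (insert (v, d) Y) v).Nonempty := by rw [hY']; exact insert_nonempty _ _
  rw [dif_pos hXne, dif_pos hYne]
  by_cases hX : (coup X v).Nonempty
  · have hY : (coup Y v).Nonempty := hX.mono (coup_mono hXY v)
    rw [dif_pos hX, dif_pos hY]
    set mX := (coup X v).max' hX with hmX
    set mY := (coup Y v).max' hY with hmY
    have hmXY : mX ≤ mY := Finset.max'_subset hX (coup_mono hXY v)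
    have h1 : (coup (insert (v, d) X) v).max' hXne = max mX d := by
      rw [max'_congr' hX' hXne (insert_nonempty _ _), Finset.max'_insert d (coup X v) hX]; exact max_comm _ _
    have h2 : (coup (insert (v, d) Y) v).max' hYne = max mY d := by
      rw [max'_congr' hY' hYne (insert_nonempty _ _), Finset.max'_insert d (coup Y v) hY]; exact max_comm _ _
    rw [h1, h2]
    rcases le_total d mX with hd | hd
    · rw [max_eq_left hd, max_eq_left (hd.trans hmXY)]; simp
    · rw [max_eq_right hd]
      rcases le_total d mY with hd' | hd'
      · rw [max_eq_left hd']
        have := hpmono v mX d hd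
        linarith
      · rw [max_eq_right hd']
        have := hpmono v mX mY hmXY
        linarith
  · rw [dif_neg hX]
    have h1 : (coup (insert (v, d) X) v).max' hXne = d := by
      have he : coup X v = ∅ := Finset.not_nonempty_iff_eq_empty.mp hX
      rw [max'_congr' (hX'.trans (by rw [he, insert_empty_eq])) hXne (singleton_nonempty d)]
      exact Finset.max'_singleton d
    rw [h1, sub_zero]
    by_cases hY : (coup Y v).Nonempty
    · rw [dif_pos hY]
      set mY := (coup Y v).max' hY with hmY
      have h2 : (coup (insert (v, d) Y) v).max' hYne = max mY d := by
        rw [max'_congr' hY' hYne (insert_nonempty _ _), Finset.max'_insert d (coup Y v) hY]; exact max_comm _ _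
      rw [h2]
      rcases le_total d mY with hd | hd
      · rw [max_eq_left hd]
        have := hp0 v d
        linarith
      · rw [max_eq_right hd]
        have := hp0 v mY
        linarith
    · rw [dif_neg hY]
      have h2 : (coup (insert (v, d) Y) v).max' hYne = d := by
        have he : coup Y v = ∅ := Finset.not_nonempty_iff_eq_empty.mp hY
        rw [max'_congr' (hY'.trans (by rw [he, insert_empty_eq])) hYne (singleton_nonempty d)]
        exact Finset.max'_singleton d
      rw [h2, sub_zero]

/-- multilinear extension over ground set `A`. -/
noncomputable def mlinF (A : Finset V) (x : V → ℝ) (r : Finset V → ℝ) : ℝ :=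
  ∑ U ∈ A.powerset, (∏ u ∈ U, x u) * (∏ w ∈ A \ U, (1 - x w)) * r U

lemma mlinF_insert {A : Finset V} {v : V} (hv : v ∉ A) (x : V → ℝ) (r : Finset V → ℝ) :
    mlinF (insert v A) x r
      = x v * mlinF A x (fun U => r (insert v U)) + (1 - x v) * mlinF A x r := by
  unfold mlinF
  rw [Finset.sum_powerset_insert hv, Finset.mul_sum, Finset.mul_sum, add_comm]
  congr 1
  · refine Finset.sum_congr rfl fun U hU => ?_
    rw [mem_powerset] at hU
    have hvU : v ∉ U := fun h => hv (hU h)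
    have h1 : insert v A \ insert v U = A \ U := by
      ext a; simp only [mem_sdiff, mem_insert, not_or]
      constructor
      · rintro ⟨h | h, h2, h3⟩
        · exact absurd h h2
        · exact ⟨h, h3⟩
      · rintro ⟨h1, h2⟩
        refine ⟨Or.inr h1, fun hc => hv ?_, h2⟩
        · rw [← hc]; exact h1
    rw [h1, Finset.prod_insert hvU]
    ring
  · refine Finset.sum_congr rfl fun U hU => ?_
    rw [mem_powerset] at hU
    have hvU : v ∉ A \ U := fun h => hv (mem_sdiff.mp h).1
    have h1 : insert v A \ U = insert v (A \ U) := by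
      ext a; simp only [mem_sdiff, mem_insert]
      constructor
      · rintro ⟨h | h, h2⟩
        · exact Or.inl h
        · exact Or.inr ⟨h, h2⟩
      · rintro (rfl | ⟨h1, h2⟩)
        · exact ⟨Or.inl rfl, fun hc => hv (hU hc)⟩
        · exact ⟨Or.inr h1, h2⟩
    rw [h1, Finset.prod_insert hvU]
    ring

lemma mlinF_update_of_not_mem {A : Finset V} {v : V} (hv : v ∉ A) (x : V → ℝ) (a : ℝ)
    (r : Finset V → ℝ) : mlinF A (Function.update x v a) r = mlinF A x r := by
  refine Finset.sum_congr rfl fun U hU => ?_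
  rw [mem_powerset] at hU
  have h1 : ∏ u ∈ U, Function.update x v a u = ∏ u ∈ U, x u :=
    Finset.prod_congr rfl fun u hu =>
      Function.update_of_ne (fun hc => hv (by rw [← hc]; exact hU hu)) _ _
  have h2 : ∏ w ∈ A \ U, (1 - Function.update x v a w) = ∏ w ∈ A \ U, (1 - x w) :=
    Finset.prod_congr rfl fun w hw => by
      rw [Function.update_of_ne (fun hc => hv (by rw [← hc]; exact (mem_sdiff.mp hw).1))]
  rw [h1, h2]

lemma weight_nonneg {A U : Finset V} (hU : U ∈ A.powerset) {x : V → ℝ}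
    (hx : ∀ u ∈ A, 0 ≤ x u ∧ x u ≤ 1) :
    0 ≤ (∏ u ∈ U, x u) * (∏ w ∈ A \ U, (1 - x w)) := by
  rw [mem_powerset] at hU
  refine mul_nonneg (Finset.prod_nonneg fun u hu => (hx u (hU hu)).1)
    (Finset.prod_nonneg fun w hw => ?_)
  have := (hx w (mem_sdiff.mp hw).1).2
  linarith

lemma mlinF_mono_r {A : Finset V} {x : V → ℝ} (hx : ∀ u ∈ A, 0 ≤ x u ∧ x u ≤ 1)
    {r s : Finset V → ℝ} (h : ∀ U ∈ A.powerset, r U ≤ s U) :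
    mlinF A x r ≤ mlinF A x s := by
  refine Finset.sum_le_sum fun U hU => ?_
  exact mul_le_mul_of_nonneg_left (h U hU) (weight_nonneg hU hx)

lemma mlinF_zero (A : Finset V) (x : V → ℝ) : mlinF A x (fun _ => (0:ℝ)) = 0 := by
  simp [mlinF]

lemma mlinF_nonneg {A : Finset V} {x : V → ℝ} (hx : ∀ u ∈ A, 0 ≤ x u ∧ x u ≤ 1)
    {r : Finset V → ℝ} (hr : ∀ U ∈ A.powerset, 0 ≤ r U) : 0 ≤ mlinF A x r := by
  have := mlinF_mono_r hx (s := r) (r := fun _ => (0:ℝ)) hr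
  rwa [mlinF_zero] at this

lemma mlinF_neg (A : Finset V) (x : V → ℝ) (r : Finset V → ℝ) :
    mlinF A x (fun U => -r U) = -mlinF A x r := by
  simp [mlinF, mul_neg, ← Finset.sum_neg_distrib]

lemma mlinF_sub (A : Finset V) (x : V → ℝ) (r s : Finset V → ℝ) :
    mlinF A x (fun U => r U - s U) = mlinF A x r - mlinF A x s := by
  simp [mlinF, mul_sub, Finset.sum_sub_distrib]

lemma mlinF_mono_x : ∀ (A : Finset V) (x y : V → ℝ) (r : Finset V → ℝ),
    (∀ u ∈ A, x u ≤ y u) → (∀ u ∈ A, 0 ≤ x u) → (∀ u ∈ A, y u ≤ 1) →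
    (∀ U W : Finset V, U ⊆ W → W ∈ A.powerset → r U ≤ r W) →
    mlinF A x r ≤ mlinF A y r := by
  intro A
  induction A using Finset.induction_on with
  | empty => intro x y r _ _ _ _; simp [mlinF]
  | @insert v A hv ih =>
    intro x y r hxy hx0 hy1 hr
    rw [mlinF_insert hv x r, mlinF_insert hv y r]
    have hxyA : ∀ u ∈ A, x u ≤ y u := fun u hu => hxy u (mem_insert_of_mem hu)
    have hx0A : ∀ u ∈ A, 0 ≤ x u := fun u hu => hx0 u (mem_insert_of_mem hu)
    have hy1A : ∀ u ∈ A, y u ≤ 1 := fun u hu => hy1 u (mem_insert_of_mem hu)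
    have hyA : ∀ u ∈ A, 0 ≤ y u ∧ y u ≤ 1 := fun u hu =>
      ⟨le_trans (hx0A u hu) (hxyA u hu), hy1A u hu⟩
    have h1 : mlinF A x (fun U => r (insert v U)) ≤ mlinF A y (fun U => r (insert v U)) := by
      refine ih x y _ hxyA hx0A hy1A fun U W hUW hW => ?_
      exact hr (insert v U) (insert v W) (insert_subset_insert _ hUW)
        (mem_powerset.mpr (insert_subset_insert _ (mem_powerset.mp hW)))
    have h2 : mlinF A x r ≤ mlinF A y r := by
      refine ih x y r hxyA hx0A hy1A fun U W hUW hW => ?_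
      exact hr U W hUW (mem_powerset.mpr ((mem_powerset.mp hW).trans (subset_insert _ _)))
    have h3 : mlinF A y r ≤ mlinF A y (fun U => r (insert v U)) := by
      refine mlinF_mono_r hyA fun U hU => ?_
      exact hr U (insert v U) (subset_insert _ _)
        (mem_powerset.mpr (insert_subset_insert _ (mem_powerset.mp hU)))
    have hxv0 : 0 ≤ x v := hx0 v (mem_insert_self _ _)
    have hxvy : x v ≤ y v := hxy v (mem_insert_self _ _)
    have hyv1 : y v ≤ 1 := hy1 v (mem_insert_self _ _)
    nlinarith [h1, h2, h3]

lemma expCascade_eq_mlinF (p : V → ℝ → ℝ) (γ : Finset V → ℝ) (S : Finset (V × ℝ)) :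
    expCascade p γ S = mlinF univ (rho p S) γ := by
  unfold expCascade prSeed mlinF
  rw [Finset.powerset_univ]
  refine Finset.sum_congr rfl fun U _ => ?_
  rw [Finset.compl_eq_univ_sdiff, mul_assoc]

lemma expCascade_insert_diff (p : V → ℝ → ℝ) (q : Finset V → ℝ) (e : V × ℝ)
    (S : Finset (V × ℝ)) :
    expCascade p q (insert e S) - expCascade p q S
      = (rho p (insert e S) e.1 - rho p S e.1) *
        mlinF (univ.erase e.1) (rho p S) (fun U => q (insert e.1 U) - q U) := by
  have hv : e.1 ∉ univ.erase e.1 := notMem_erase _ _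
  have huniv : insert e.1 (univ.erase e.1) = (univ : Finset V) :=
    insert_erase (mem_univ e.1)
  rw [expCascade_eq_mlinF, expCascade_eq_mlinF, ← huniv, mlinF_insert hv, mlinF_insert hv,
    rho_insert_update p e S, mlinF_update_of_not_mem hv, mlinF_update_of_not_mem hv,
    Function.update_self, mlinF_sub]
  rw [huniv]
  ring

end ApproxSubAux

open ApproxSubAux

theorem expCascade_approx_submodular
    {V : Type*} [Fintype V] [DecidableEq V]
    (p : V → ℝ → ℝ)
    (hp0 : ∀ v d, 0 ≤ p v d) (hp1 : ∀ v d, p v d ≤ 1)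
    (hpmono : ∀ v, ∀ d d' : ℝ, d ≤ d' → p v d ≤ p v d')
    (q : Finset V → ℝ)
    (hqmono : ∀ U W : Finset V, U ⊆ W → q U ≤ q W)
    (hqsub : ∀ X Y : Finset V, X ⊆ Y → ∀ x ∉ Y,
      q (insert x X) - q X ≥ q (insert x Y) - q Y)
    (ε : ℝ) (hε0 : 0 ≤ ε) (hε1 : ε < 1)
    (γ : Finset V → ℝ)
    (hγ : ∀ U : Finset V, (1 - ε) * q U ≤ γ U ∧ γ U ≤ (1 + ε) * q U) :
    (∀ S T : Finset (V × ℝ), S ⊆ T →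
      expCascade p q S ≤ expCascade p q T) ∧
    (∀ X Y : Finset (V × ℝ), X ⊆ Y → ∀ e ∉ Y,
      expCascade p q (insert e X) - expCascade p q X ≥
        expCascade p q (insert e Y) - expCascade p q Y) ∧
    (∀ S : Finset (V × ℝ),
      (1 - ε) * expCascade p q S ≤ expCascade p γ S ∧
        expCascade p γ S ≤ (1 + ε) * expCascade p q S) := by
  have hrho01 : ∀ (S : Finset (V × ℝ)) (A : Finset V), ∀ u ∈ A,
      0 ≤ rho p S u ∧ rho p S u ≤ 1 := fun S A u _ =>
    ⟨rho_nonneg p hp0 S u, rho_le_one p hp1 S u⟩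
  refine ⟨?_, ?_, ?_⟩
  · -- monotone
    intro S T hST
    rw [expCascade_eq_mlinF, expCascade_eq_mlinF]
    exact mlinF_mono_x univ (rho p S) (rho p T) q
      (fun u _ => rho_mono p hp0 hpmono hST u)
      (fun u _ => rho_nonneg p hp0 S u)
      (fun u _ => rho_le_one p hp1 T u)
      (fun U W hUW _ => hqmono U W hUW)
  · -- submodular
    intro X Y hXY e he
    rw [ge_iff_le, expCascade_insert_diff, expCascade_insert_diff]
    set v := e.1
    set m : Finset V → ℝ := fun U => q (insert v U) - q U with hm
    have hmanti : ∀ U W : Finset V, U ⊆ W → W ∈ (univ.erase v).powerset → m W ≤ m U := by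
      intro U W hUW hW
      have hvW : v ∉ W := fun hc => (mem_erase.mp (mem_powerset.mp hW hc)).1 rfl
      exact hqsub U W hUW v hvW
    have hmnn : ∀ U ∈ (univ.erase v).powerset, 0 ≤ m U := fun U _ =>
      sub_nonneg.mpr (hqmono U (insert v U) (subset_insert _ _))
    have hMle : mlinF (univ.erase v) (rho p Y) m ≤ mlinF (univ.erase v) (rho p X) m := by
      have := mlinF_mono_x (univ.erase v) (rho p X) (rho p Y) (fun U => -m U)
        (fun u _ => rho_mono p hp0 hpmono hXY u)
        (fun u _ => rho_nonneg p hp0 X u)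
        (fun u _ => rho_le_one p hp1 Y u)
        (fun U W hUW hW => neg_le_neg (hmanti U W hUW hW))
      rw [mlinF_neg, mlinF_neg] at this
      linarith
    have hMnn : 0 ≤ mlinF (univ.erase v) (rho p Y) m :=
      mlinF_nonneg (hrho01 Y _) hmnn
    have hdle := delta_anti p hp0 hpmono hXY e
    have hdnn : 0 ≤ rho p (insert e Y) v - rho p Y v :=
      sub_nonneg.mpr (rho_mono p hp0 hpmono (subset_insert e Y) v)
    exact mul_le_mul hdle hMle hMnn (le_trans hdnn hdle)
  · -- approximation
    intro S
    have hpr : ∀ U : Finset V, 0 ≤ prSeed p U S := by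
      intro U
      refine mul_nonneg (Finset.prod_nonneg fun u _ => rho_nonneg p hp0 S u)
        (Finset.prod_nonneg fun u _ => ?_)
      have := rho_le_one p hp1 S u
      linarith
    constructor
    · unfold expCascade
      rw [Finset.mul_sum]
      refine Finset.sum_le_sum fun U _ => ?_
      calc (1 - ε) * (prSeed p U S * q U) = prSeed p U S * ((1 - ε) * q U) := by ring
        _ ≤ prSeed p U S * γ U := mul_le_mul_of_nonneg_left (hγ U).1 (hpr U)
    · unfold expCascade
      rw [Finset.mul_sum]
      refine Finset.sum_le_sum fun U _ => ?_
      calc prSeed p U S * γ U ≤ prSeed p U S * ((1 + ε) * q U) :=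
            mul_le_mul_of_nonneg_left (hγ U).2 (hpr U)
        _ = (1 + ε) * (prSeed p U S * q U) := by ring
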